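/- Let b : ℝ → ℝ be continuous and 2π-periodic (viewed as a continuous real-valued function on the unit circle), and let c ∈ ℝ. Define F(z) := (1/2π)∫₀^{2π} b(t)·(e^{it} + z)/(e^{it} − z) dt + i·c for z in the open unit disk D. Then: (i) F is holomorphic on D; (ii) Im F(0) = c; (iii) for every θ₀ ∈ ℝ, Re F(z) → b(θ₀) as z → e^{iθ₀} within D. Moreover, if G is holomorphic on D with Im G(0) = c and Re G(z) → b(θ₀) as z → e^{iθ₀} within D for every θ₀ ∈ ℝ, then G = F on D. -/

import Mathlib

open Complex Real Metric Filter Set intervalIntegral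

/-- The open unit disk in `ℂ`. -/
noncomputable def unitDisk : Set ℂ := Metric.ball (0 : ℂ) 1

/-- The Schwarz integral of a boundary datum `b`, shifted by `i·c`. -/
noncomputable def schwarzIntegral (b : ℝ → ℝ) (c : ℝ) (z : ℂ) : ℂ :=
  (1 / (2 * Real.pi)) * ∫ t in (0 : ℝ)..(2 * Real.pi),
      (b t : ℂ) * ((Complex.exp (Complex.I * t) + z) / (Complex.exp (Complex.I * t) - z))
    + Complex.I * c

noncomputable section SchwarzAux

/-- boundary point -/
def bp (t : ℝ) : ℂ := Complex.exp (Complex.I * t)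

lemma bp_abs (t : ℝ) : ‖bp t‖ = 1 := by
  simp [bp, Complex.norm_exp]

lemma bp_norm (t : ℝ) : ‖bp t‖ = 1 := bp_abs t

lemma bp_ne_zero (t : ℝ) : bp t ≠ 0 := Complex.exp_ne_zero _

lemma bp_periodic : Function.Periodic bp (2 * Real.pi) := by
  intro t
  simp [bp, mul_add, Complex.exp_add, mul_comm Complex.I ((2:ℂ) * (Real.pi:ℂ))]

lemma bp_continuous : Continuous bp := by
  exact Complex.continuous_exp.comp (continuous_const.mul Complex.continuous_ofReal)

lemma norm_bp_sub {z : ℂ} (t : ℝ) : 1 - ‖z‖ ≤ ‖bp t - z‖ := by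
  calc 1 - ‖z‖ = ‖bp t‖ - ‖z‖ := by rw [bp_norm]
  _ ≤ ‖bp t - z‖ := norm_sub_norm_le _ _

lemma bp_sub_ne_zero {z : ℂ} (hz : ‖z‖ < 1) (t : ℝ) : bp t - z ≠ 0 := by
  intro h
  have := norm_bp_sub (z := z) t
  rw [h, norm_zero] at this
  linarith

/-- the Schwarz kernel -/
def κ (z : ℂ) (t : ℝ) : ℂ := (bp t + z) / (bp t - z)

lemma κ_periodic (z : ℂ) : Function.Periodic (κ z) (2 * Real.pi) := by
  intro t; simp [κ, bp_periodic t]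

lemma κ_continuous {z : ℂ} (hz : ‖z‖ < 1) : Continuous (κ z) :=
  (bp_continuous.add continuous_const).div (bp_continuous.sub continuous_const)
    fun t => bp_sub_ne_zero hz t

lemma norm_κ_le {z : ℂ} (hz : ‖z‖ < 1) (t : ℝ) : ‖κ z t‖ ≤ 2 / (1 - ‖z‖) := by
  have h1 : (0:ℝ) < 1 - ‖z‖ := by linarith
  have h2 : 1 - ‖z‖ ≤ ‖bp t - z‖ := norm_bp_sub t
  have h3 : ‖bp t + z‖ ≤ 2 := by
    calc ‖bp t + z‖ ≤ ‖bp t‖ + ‖z‖ := norm_add_le _ _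
    _ ≤ 1 + 1 := by rw [bp_norm]; linarith
    _ = 2 := by norm_num
  rw [κ, norm_div]
  calc ‖bp t + z‖ / ‖bp t - z‖ ≤ 2 / (1 - ‖z‖) := by gcongr

lemma κ_intervalIntegrable {z : ℂ} (hz : ‖z‖ < 1) (b : ℝ → ℝ) (hb : Continuous b) (a₁ a₂ : ℝ) :
    IntervalIntegrable (fun t => (b t : ℂ) * κ z t) MeasureTheory.volume a₁ a₂ :=
  ((Complex.continuous_ofReal.comp hb).mul (κ_continuous hz)).intervalIntegrable _ _

/-- The kernel part of the schwarz integral -/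
def SK (b : ℝ → ℝ) (z : ℂ) : ℂ := ∫ t in (0:ℝ)..(2*Real.pi), (b t : ℂ) * κ z t

lemma schwarz_decomp (b : ℝ → ℝ) (hb : Continuous b) (c : ℝ) {z : ℂ} (hz : ‖z‖ < 1) :
    schwarzIntegral b c z = (1 / (2 * Real.pi) : ℝ) * SK b z + Complex.I * c := by
  have h1 := κ_intervalIntegrable hz b hb 0 (2*Real.pi)
  have h2 : IntervalIntegrable (fun _ : ℝ => Complex.I * c) MeasureTheory.volume 0 (2*Real.pi) :=
    intervalIntegrable_const
  have hπ : (Real.pi : ℂ) ≠ 0 := by exact_mod_cast Real.pi_ne_zero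
  rw [show schwarzIntegral b c z = (1 / (2 * (Real.pi:ℂ))) *
      ∫ t in (0:ℝ)..(2*Real.pi), ((b t : ℂ) * κ z t + Complex.I * c) from rfl,
    intervalIntegral.integral_add h1 h2, intervalIntegral.integral_const]
  rw [SK]
  push_cast
  rw [mul_add]
  congr 1
  rw [real_smul]
  push_cast
  field_simp
  ring

lemma κ_antideriv {z : ℂ} (hz : ‖z‖ < 1) (t : ℝ) :
    HasDerivAt (fun s : ℝ => (s : ℂ) +
      (2 / Complex.I) * Complex.log (1 - z * Complex.exp (-(Complex.I * s)))) (κ z t) t := by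
  set E := Complex.exp (Complex.I * t) with hE
  have hEne : E ≠ 0 := Complex.exp_ne_zero _
  have hEinv : Complex.exp (-(Complex.I * t)) = E⁻¹ := by rw [hE, ← Complex.exp_neg]
  have habs : ‖z * Complex.exp (-(Complex.I * t))‖ = ‖z‖ := by
    rw [norm_mul, hEinv, norm_inv]
    rw [show ‖E‖ = 1 from bp_abs t]
    simp
  have hw : (1 : ℂ) - z * Complex.exp (-(Complex.I * t)) ∈ Complex.slitPlane := by
    apply Complex.mem_slitPlane_iff.mpr
    left
    have : (z * Complex.exp (-(Complex.I * t))).re ≤ ‖z‖ := by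
      calc (z * Complex.exp (-(Complex.I * t))).re ≤ ‖z * Complex.exp (-(Complex.I * t))‖ :=
        Complex.re_le_norm _
      _ = ‖z‖ := habs
    have : (1 - z * Complex.exp (-(Complex.I * t))).re = 1 - (z * Complex.exp (-(Complex.I * t))).re := by
      simp
    rw [this]
    have hzabs : ‖z‖ < 1 := hz
    linarith [Complex.re_le_norm (z * Complex.exp (-(Complex.I * t)))]
  have hwne : (1 : ℂ) - z * Complex.exp (-(Complex.I * t)) ≠ 0 :=
    Complex.slitPlane_ne_zero hw
  -- complex derivative of inner function
  have hg : HasDerivAt (fun w : ℂ => 1 - z * Complex.exp (-(Complex.I * w)))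
      (z * Complex.I * Complex.exp (-(Complex.I * t))) (t : ℂ) := by
    have h1 : HasDerivAt (fun w : ℂ => -(Complex.I * w)) (-Complex.I) (t : ℂ) := by
      have h := ((hasDerivAt_id (t:ℂ)).const_mul Complex.I).neg
      rw [mul_one] at h
      exact h
    have h2 := h1.cexp
    have h3 := (h2.const_mul z).const_sub 1
    exact h3.congr_deriv (by ring)
  have hlog := (Complex.hasDerivAt_log hw).comp (t : ℂ) hg
  have hfull := ((hasDerivAt_id (t:ℂ)).add ((hlog.const_mul (2 / Complex.I)))).comp_ofReal
  refine hfull.congr_deriv (Eq.symm ?_)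
  rw [κ, bp]
  have hne : E - z ≠ 0 := bp_sub_ne_zero hz t
  rw [hEinv]
  have h4 : (1 : ℂ) - z * E⁻¹ = (E - z)/E := by field_simp
  rw [h4, inv_div]
  have hne' : Complex.exp (Complex.I * t) - z ≠ 0 := hne
  field_simp
  rw [hE]
  ring

lemma integral_κ {z : ℂ} (hz : ‖z‖ < 1) :
    ∫ t in (0:ℝ)..(2*Real.pi), κ z t = 2 * Real.pi := by
  rw [intervalIntegral.integral_eq_sub_of_hasDerivAt (fun t _ => κ_antideriv hz t)
    ((κ_continuous hz).intervalIntegrable _ _)]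
  have h1 : Complex.exp (-(Complex.I * ((2:ℂ) * (Real.pi:ℂ)))) = 1 := by
    rw [show -(Complex.I * ((2:ℂ) * (Real.pi:ℂ))) = (-1 : ℤ) * (2 * (Real.pi:ℂ) * Complex.I) by push_cast; ring]
    exact Complex.exp_int_mul_two_pi_mul_I (-1)
  push_cast
  rw [h1]
  simp

lemma κ_re (z : ℂ) (t : ℝ) :
    (κ z t).re = (1 - Complex.normSq z) / Complex.normSq (bp t - z) := by
  have h1 : Complex.normSq (bp t) = 1 := by
    rw [Complex.normSq_eq_norm_sq, bp_abs]; norm_num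
  rw [κ, Complex.div_re, ← add_div]
  congr 1
  simp only [Complex.add_re, Complex.add_im, Complex.sub_re, Complex.sub_im,
    Complex.normSq_apply] at h1 ⊢
  linear_combination h1

lemma κ_re_nonneg {z : ℂ} (hz : ‖z‖ < 1) (t : ℝ) : 0 ≤ (κ z t).re := by
  rw [κ_re]
  have h2 : Complex.normSq z < 1 := by
    rw [Complex.normSq_eq_norm_sq]
    nlinarith [norm_nonneg z, show ‖z‖ < 1 from hz]
  have hd : 0 < Complex.normSq (bp t - z) := Complex.normSq_pos.mpr (bp_sub_ne_zero hz t)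
  exact div_nonneg (by linarith) hd.le

lemma integral_κ_re {z : ℂ} (hz : ‖z‖ < 1) :
    ∫ t in (0:ℝ)..(2*Real.pi), (κ z t).re = 2 * Real.pi := by
  have h := Complex.reCLM.intervalIntegral_comp_comm
    ((κ_continuous hz).intervalIntegrable (μ := MeasureTheory.volume) 0 (2*Real.pi))
  have h2 : (∫ t in (0:ℝ)..(2*Real.pi), Complex.reCLM (κ z t)) = Complex.reCLM (2 * Real.pi : ℂ) := by
    rw [h, integral_κ hz]
  simpa using h2

lemma integral_κ_re_shift {z : ℂ} (hz : ‖z‖ < 1) (θ₀ : ℝ) :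
    ∫ t in (θ₀ - Real.pi)..(θ₀ + Real.pi), (κ z t).re = 2 * Real.pi := by
  have hper : Function.Periodic (fun t => (κ z t).re) (2 * Real.pi) := fun t => by
    simp [κ_periodic z t]
  have := hper.intervalIntegral_add_eq (θ₀ - Real.pi) 0
  rw [show θ₀ - Real.pi + 2 * Real.pi = θ₀ + Real.pi by ring, show (0:ℝ) + 2*Real.pi = 2*Real.pi by ring] at this
  rw [this, integral_κ_re hz]

lemma chord (s u : ℝ) : ‖bp s - bp u‖ = 2 * |Real.sin ((s - u)/2)| := by
  have e1 : ∀ x : ℝ, Complex.exp (Complex.I*x) - Complex.exp (-(Complex.I*x))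
      = 2*Complex.I*(Real.sin x : ℂ) := by
    intro x
    rw [show Complex.I * (x:ℂ) = (x:ℂ) * Complex.I by ring, Complex.exp_mul_I,
      show -((x:ℂ) * Complex.I) = (-x:ℂ) * Complex.I by push_cast; ring, Complex.exp_mul_I]
    rw [Complex.cos_neg, Complex.sin_neg]
    rw [← Complex.ofReal_sin]
    ring
  have key : bp s - bp u = bp ((s+u)/2) *
      (Complex.exp (Complex.I * (((s-u)/2 : ℝ) : ℂ)) - Complex.exp (-(Complex.I * (((s-u)/2 : ℝ) : ℂ)))) := by
    rw [mul_sub, bp, bp, bp, ← Complex.exp_add, ← Complex.exp_add]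
    congr 2 <;> push_cast <;> ring
  rw [key, e1, norm_mul, bp_abs, one_mul]
  rw [show (2:ℂ)*Complex.I*(Real.sin ((s-u)/2) : ℂ) = ((2:ℂ)*Complex.I)*((Real.sin ((s-u)/2) : ℝ):ℂ) by ring,
    norm_mul, Complex.norm_real]
  simp

lemma κ_re_far {z : ℂ} (hz : ‖z‖ < 1) {θ₀ t ρ : ℝ} (hρ : 0 < ρ)
    (ht : ρ ≤ ‖bp t - bp θ₀‖) (hzc : ‖z - bp θ₀‖ ≤ ρ/2) :
    (κ z t).re ≤ 8 * ‖z - bp θ₀‖ / ρ^2 := by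
  have htri : ‖bp t - bp θ₀‖ ≤ ‖bp t - z‖ + ‖z - bp θ₀‖ := by
    simpa [Complex.dist_eq] using dist_triangle (bp t) z (bp θ₀)
  have h1 : ρ/2 ≤ ‖bp t - z‖ := by linarith
  have h2 : ρ^2/4 ≤ Complex.normSq (bp t - z) := by
    rw [Complex.normSq_eq_norm_sq]
    nlinarith [norm_nonneg (bp t - z)]
  have h3 : 1 - ‖z‖ ≤ ‖z - bp θ₀‖ := by
    have h5 : ‖bp θ₀‖ ≤ ‖bp θ₀ - z‖ + ‖z‖ := by
      simpa using norm_add_le (bp θ₀ - z) z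
    rw [bp_abs] at h5
    rw [norm_sub_rev]
    linarith
  have h4 : 1 - Complex.normSq z ≤ 2 * ‖z - bp θ₀‖ := by
    rw [Complex.normSq_eq_norm_sq]
    nlinarith [norm_nonneg z, show ‖z‖ < 1 from hz, h3]
  rw [κ_re]
  calc (1 - Complex.normSq z) / Complex.normSq (bp t - z)
      ≤ (2 * ‖z - bp θ₀‖) / (ρ^2/4) := by
        apply div_le_div₀ (by positivity) h4 (by positivity) h2
  _ = 8 * ‖z - bp θ₀‖ / ρ^2 := by field_simp; ring

lemma schwarz_re (b : ℝ → ℝ) (hb : Continuous b) (c : ℝ) {z : ℂ} (hz : ‖z‖ < 1) :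
    (schwarzIntegral b c z).re
      = (1 / (2 * Real.pi)) * ∫ t in (0:ℝ)..(2*Real.pi), b t * (κ z t).re := by
  rw [schwarz_decomp b hb c hz]
  have hre : (SK b z).re = ∫ t in (0:ℝ)..(2*Real.pi), b t * (κ z t).re := by
    have h := Complex.reCLM.intervalIntegral_comp_comm (κ_intervalIntegrable hz b hb 0 (2*Real.pi))
    rw [SK, show (∫ (t : ℝ) in (0:ℝ)..(2*Real.pi), (b t:ℂ) * κ z t).re
      = Complex.reCLM (∫ (t : ℝ) in (0:ℝ)..(2*Real.pi), (b t:ℂ) * κ z t) from rfl, ← h]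
    congr 1
    ext t
    simp [Complex.re_ofReal_mul]
  simp [Complex.add_re, Complex.re_ofReal_mul, hre]

lemma schwarz_im_zero (b : ℝ → ℝ) (hb : Continuous b) (c : ℝ) :
    (schwarzIntegral b c 0).im = c := by
  rw [schwarz_decomp b hb c (by norm_num)]
  have him : (SK b 0).im = 0 := by
    have h := Complex.imCLM.intervalIntegral_comp_comm
      (κ_intervalIntegrable (show ‖(0:ℂ)‖ < 1 by norm_num) b hb 0 (2*Real.pi))
    rw [SK, show (∫ (t : ℝ) in (0:ℝ)..(2*Real.pi), (b t:ℂ) * κ 0 t).im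
      = Complex.imCLM (∫ (t : ℝ) in (0:ℝ)..(2*Real.pi), (b t:ℂ) * κ 0 t) from rfl, ← h]
    have : ∀ t : ℝ, Complex.imCLM ((b t : ℂ) * κ 0 t) = 0 := by
      intro t
      simp [κ, div_self (bp_ne_zero t)]
    simp [this]
  simp [Complex.add_im, Complex.im_ofReal_mul, him]


lemma schwarz_fun_eq (b : ℝ → ℝ) (c : ℝ) : schwarzIntegral b c
    = fun x => (1 / (2 * (Real.pi:ℂ))) * ∫ t in (0:ℝ)..(2*Real.pi),
        ((b t : ℂ) * κ x t + Complex.I * c) := rfl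

set_option maxHeartbeats 1000000 in
lemma schwarz_differentiableAt (b : ℝ → ℝ) (hb : Continuous b) (c : ℝ) {z₀ : ℂ}
    (hz : ‖z₀‖ < 1) : DifferentiableAt ℂ (schwarzIntegral b c) z₀ := by
  have hε0 : 0 < (1 - ‖z₀‖)/2 := by linarith
  have hball : ∀ x ∈ ball z₀ ((1 - ‖z₀‖)/2), ‖x‖ < 1 ∧ ∀ t : ℝ, (1 - ‖z₀‖)/2 ≤ ‖bp t - x‖ := by
    intro x hx
    have h1 : ‖x - z₀‖ < (1 - ‖z₀‖)/2 := by rwa [mem_ball, dist_eq_norm] at hx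
    have h2 : ‖x‖ < 1 - (1 - ‖z₀‖)/2 := by
      calc ‖x‖ ≤ ‖x - z₀‖ + ‖z₀‖ := by simpa using norm_add_le (x - z₀) z₀
      _ < (1 - ‖z₀‖)/2 + ‖z₀‖ := by linarith
      _ = 1 - (1 - ‖z₀‖)/2 := by ring
    exact ⟨by linarith, fun t => by have := norm_bp_sub (z := x) t; linarith⟩
  have key := intervalIntegral.hasDerivAt_integral_of_dominated_loc_of_deriv_le
    (μ := MeasureTheory.volume) (a := (0:ℝ)) (b := 2*Real.pi)
    (F := fun x t => (b t : ℂ) * κ x t + Complex.I * c)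
    (F' := fun x t => (b t : ℂ) * (2 * bp t / (bp t - x)^2))
    (bound := fun t => |b t| * (2/((1 - ‖z₀‖)/2)^2)) (x₀ := z₀) (Metric.ball_mem_nhds _ hε0)
    ?_ ?_ ?_ ?_ ?_ ?_
  · rw [schwarz_fun_eq]
    exact ((key.2.const_mul (1 / (2 * (Real.pi:ℂ))))).differentiableAt
  · filter_upwards [(continuous_norm.tendsto z₀).eventually_lt_const (by simpa using hz)]
      with x hx
    exact (((Complex.continuous_ofReal.comp hb).mul (κ_continuous hx)).add
      continuous_const).aestronglyMeasurable
  · exact ((κ_intervalIntegrable hz b hb 0 (2*Real.pi)).add intervalIntegrable_const)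
  · refine Continuous.aestronglyMeasurable ?_
    refine (Complex.continuous_ofReal.comp hb).mul ?_
    exact (continuous_const.mul bp_continuous).div
      ((bp_continuous.sub continuous_const).pow 2)
      (fun t => pow_ne_zero 2 (bp_sub_ne_zero hz t))
  · refine MeasureTheory.ae_of_all _ fun t _ x hx => ?_
    obtain ⟨hx1, hx2⟩ := hball x hx
    have hb1 : (1 - ‖z₀‖)/2 ≤ ‖bp t - x‖ := hx2 t
    have heq : ‖(b t : ℂ) * (2 * bp t / (bp t - x)^2)‖ = |b t| * (2 / ‖bp t - x‖^2) := by
      rw [norm_mul, norm_div, norm_mul, norm_pow, bp_norm, Complex.norm_real,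
        Real.norm_eq_abs]
      norm_num
    rw [heq]
    apply mul_le_mul_of_nonneg_left _ (abs_nonneg _)
    exact div_le_div_of_nonneg_left (by norm_num) (by positivity) (by nlinarith)
  · exact (hb.abs.mul continuous_const).intervalIntegrable _ _
  · refine MeasureTheory.ae_of_all _ fun t _ x hx => ?_
    obtain ⟨hx1, hx2⟩ := hball x hx
    have hvne : bp t - x ≠ 0 := bp_sub_ne_zero hx1 t
    have hu : HasDerivAt (fun y : ℂ => bp t + y) 1 x := by
      simpa using (hasDerivAt_id x).const_add (bp t)
    have hv : HasDerivAt (fun y : ℂ => bp t - y) (-1) x := by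
      simpa using (hasDerivAt_id x).const_sub (bp t)
    have hdiv := hu.div hv hvne
    have hκ : HasDerivAt (fun y : ℂ => κ y t) (2 * bp t / (bp t - x)^2) x := by
      refine hdiv.congr_deriv (Eq.symm ?_)
      field_simp
      ring
    simpa using (hκ.const_mul ((b t : ℂ))).add_const (Complex.I * c)

lemma bmulκ_intervalIntegrable {z : ℂ} (hz : ‖z‖ < 1) (g : ℝ → ℝ) (hg : Continuous g)
    (a₁ a₂ : ℝ) :
    IntervalIntegrable (fun t => g t * (κ z t).re) MeasureTheory.volume a₁ a₂ :=
  (hg.mul (Complex.continuous_re.comp (κ_continuous hz))).intervalIntegrable _ _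

lemma schwarz_re_shift (b : ℝ → ℝ) (hb : Continuous b)
    (hbper : Function.Periodic b (2 * Real.pi)) (c : ℝ) {z : ℂ} (hz : ‖z‖ < 1) (θ₀ : ℝ) :
    (schwarzIntegral b c z).re
      = (1 / (2 * Real.pi)) * ∫ t in (θ₀ - Real.pi)..(θ₀ + Real.pi), b t * (κ z t).re := by
  rw [schwarz_re b hb c hz]
  congr 1
  have hper : Function.Periodic (fun t => b t * (κ z t).re) (2 * Real.pi) := fun t => by
    simp [hbper t, κ_periodic z t]
  have h := hper.intervalIntegral_add_eq (θ₀ - Real.pi) 0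
  simp only [zero_add] at h
  rw [show θ₀ - Real.pi + 2*Real.pi = θ₀ + Real.pi by ring] at h
  rw [h]

lemma chord_lower {θ₀ t δ : ℝ} (hδ0 : 0 < δ) (hδπ : δ ≤ Real.pi)
    (h1 : δ ≤ |t - θ₀|) (h2 : |t - θ₀| ≤ Real.pi) :
    2 * Real.sin (δ/2) ≤ ‖bp t - bp θ₀‖ := by
  rw [chord]
  have hs : |Real.sin ((t - θ₀)/2)| = Real.sin (|t - θ₀|/2) := by
    rcases le_or_gt 0 (t - θ₀) with h | h
    · rw [_root_.abs_of_nonneg h] at h2 ⊢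
      rw [_root_.abs_of_nonneg (Real.sin_nonneg_of_nonneg_of_le_pi (by linarith) (by linarith))]
    · have hs1 : Real.sin ((t - θ₀)/2) ≤ 0 := by
        have h3 := Real.sin_nonneg_of_nonneg_of_le_pi (x := -((t - θ₀)/2))
          (by linarith) (by rw [abs_of_neg h] at h2; linarith)
        rw [Real.sin_neg] at h3
        linarith
      rw [_root_.abs_of_nonpos hs1, _root_.abs_of_neg h,
        show -(t - θ₀)/2 = -((t - θ₀)/2) by ring, Real.sin_neg]
  rw [hs]
  have hmono : Real.sin (δ/2) ≤ Real.sin (|t - θ₀|/2) :=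
    Real.sin_le_sin_of_le_of_le_pi_div_two (by linarith) (by linarith) (by linarith)
  linarith

lemma schwarz_tendsto (b : ℝ → ℝ) (hb : Continuous b)
    (hbper : Function.Periodic b (2 * Real.pi)) (c : ℝ) (θ₀ : ℝ) :
    Tendsto (fun z => (schwarzIntegral b c z).re)
      (nhdsWithin (bp θ₀) (ball (0:ℂ) 1)) (nhds (b θ₀)) := by
  obtain ⟨M, hM0, hM⟩ : ∃ M : ℝ, 0 < M ∧ ∀ t, |b t| ≤ M := by
    obtain ⟨C, hC⟩ := isBounded_iff_forall_norm_le.mp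
      (hbper.isBounded_of_continuous Real.two_pi_pos.ne' hb)
    refine ⟨|C| + 1, by positivity, fun t => ?_⟩
    have := hC (b t) (Set.mem_range_self t)
    rw [Real.norm_eq_abs] at this
    calc |b t| ≤ C := this
    _ ≤ |C| + 1 := by have := le_abs_self C; linarith
  rw [Metric.tendsto_nhdsWithin_nhds]
  intro ε hε
  obtain ⟨δ₁, hδ₁0, hδ₁⟩ := Metric.continuous_iff.mp hb θ₀ (ε/6) (by positivity)
  set δ : ℝ := min δ₁ Real.pi with hδdef
  have hδ0 : 0 < δ := lt_min hδ₁0 Real.pi_pos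
  have hδπ : δ ≤ Real.pi := min_le_right _ _
  set ρ : ℝ := 2 * Real.sin (δ/2) with hρdef
  have hρ0 : 0 < ρ := by
    have : 0 < Real.sin (δ/2) := Real.sin_pos_of_pos_of_lt_pi (by linarith)
      (by nlinarith [Real.pi_pos])
    simp only [hρdef]; linarith
  refine ⟨min (ρ/2) (ε * ρ^2 / (96 * M)), by positivity, ?_⟩
  intro z hzD hdist
  have hz : ‖z‖ < 1 := by rwa [mem_ball, dist_eq_norm, sub_zero] at hzD
  have hza : ‖z - bp θ₀‖ < min (ρ/2) (ε * ρ^2 / (96 * M)) := by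
    rwa [Complex.dist_eq] at hdist
  have hza1 : ‖z - bp θ₀‖ ≤ ρ/2 := le_of_lt (lt_of_lt_of_le hza (min_le_left _ _))
  have hza2 : ‖z - bp θ₀‖ ≤ ε * ρ^2 / (96 * M) :=
    le_of_lt (lt_of_lt_of_le hza (min_le_right _ _))
  -- the difference as an integral
  have hIb := bmulκ_intervalIntegrable hz b hb (θ₀ - Real.pi) (θ₀ + Real.pi)
  have hIc := bmulκ_intervalIntegrable hz (fun _ => b θ₀) continuous_const
    (θ₀ - Real.pi) (θ₀ + Real.pi)
  have hkey : (schwarzIntegral b c z).re - b θ₀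
      = (1/(2*Real.pi)) * ∫ t in (θ₀ - Real.pi)..(θ₀ + Real.pi),
          (b t - b θ₀) * (κ z t).re := by
    rw [schwarz_re_shift b hb hbper c hz θ₀]
    have h2 : (∫ t in (θ₀ - Real.pi)..(θ₀ + Real.pi), (b t - b θ₀) * (κ z t).re)
        = (∫ t in (θ₀ - Real.pi)..(θ₀ + Real.pi), b t * (κ z t).re)
          - ∫ t in (θ₀ - Real.pi)..(θ₀ + Real.pi), b θ₀ * (κ z t).re := by
      rw [← intervalIntegral.integral_sub hIb hIc]
      congr 1
      ext t
      ring
    have h3 : (∫ t in (θ₀ - Real.pi)..(θ₀ + Real.pi), b θ₀ * (κ z t).re) = b θ₀ * (2*Real.pi) := by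
      rw [intervalIntegral.integral_const_mul, integral_κ_re_shift hz θ₀]
    rw [h2, h3, mul_sub]
    have hπ : Real.pi ≠ 0 := Real.pi_ne_zero
    field_simp
  -- pointwise bound
  set C : ℝ := 8 * ‖z - bp θ₀‖ / ρ^2 with hCdef
  have hC0 : 0 ≤ C := by positivity
  have hbound : ∀ t ∈ Set.uIoc (θ₀ - Real.pi) (θ₀ + Real.pi),
      ‖(b t - b θ₀) * (κ z t).re‖ ≤ (ε/6) * (κ z t).re + 2*M*C := by
    intro t ht
    rw [Set.uIoc_of_le (by linarith [Real.pi_pos]) ] at ht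
    have ht1 : |t - θ₀| ≤ Real.pi := by
      obtain ⟨h1, h2⟩ := ht
      rw [abs_le]; constructor <;> linarith
    rw [Real.norm_eq_abs, abs_mul, _root_.abs_of_nonneg (κ_re_nonneg hz t)]
    rcases lt_or_ge (dist t θ₀) δ with hcase | hcase
    · have hb1 : |b t - b θ₀| ≤ ε/6 := by
        have := hδ₁ t (lt_of_lt_of_le hcase (min_le_left _ _))
        rw [Real.dist_eq] at this
        linarith
      have := κ_re_nonneg hz t
      nlinarith
    · have hfar : ρ ≤ ‖bp t - bp θ₀‖ := by
        apply chord_lower hδ0 hδπ _ ht1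
        rwa [Real.dist_eq] at hcase
      have hPC : (κ z t).re ≤ C := κ_re_far hz hρ0 hfar hza1
      have hb2 : |b t - b θ₀| ≤ 2*M := by
        calc |b t - b θ₀| ≤ |b t| + |b θ₀| := abs_sub _ _
        _ ≤ 2*M := by have := hM t; have := hM θ₀; linarith
      have hP0 := κ_re_nonneg hz t
      have hε6 : (0:ℝ) ≤ ε/6 := by positivity
      nlinarith
  -- integrate the bound
  have hIbound : IntervalIntegrable (fun t => (ε/6) * (κ z t).re + 2*M*C)
      MeasureTheory.volume (θ₀ - Real.pi) (θ₀ + Real.pi) :=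
    ((bmulκ_intervalIntegrable hz (fun _ => ε/6) continuous_const _ _).add
      intervalIntegrable_const)
  have habs : ‖∫ t in (θ₀ - Real.pi)..(θ₀ + Real.pi), (b t - b θ₀) * (κ z t).re‖
      ≤ |∫ t in (θ₀ - Real.pi)..(θ₀ + Real.pi), ((ε/6) * (κ z t).re + 2*M*C)| :=
    intervalIntegral.norm_integral_le_abs_of_norm_le
      (MeasureTheory.ae_restrict_of_forall_mem measurableSet_uIoc hbound) hIbound
  have hval : (∫ t in (θ₀ - Real.pi)..(θ₀ + Real.pi), ((ε/6) * (κ z t).re + 2*M*C))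
      = (ε/6) * (2*Real.pi) + 2*M*C * (2*Real.pi) := by
    rw [intervalIntegral.integral_add (bmulκ_intervalIntegrable hz (fun _ => ε/6)
      continuous_const _ _) intervalIntegrable_const,
      intervalIntegral.integral_const_mul, integral_κ_re_shift hz θ₀,
      intervalIntegral.integral_const]
    rw [smul_eq_mul]
    ring
  have hCsmall : 2*M*C ≤ ε/6 := by
    have he1 : 2*M*C = 16*M*‖z - bp θ₀‖/ρ^2 := by rw [hCdef]; ring
    have h16 : 16*M*‖z - bp θ₀‖ ≤ 16*M*(ε*ρ^2/(96*M)) := by nlinarith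
    have he2 : 16*M*(ε*ρ^2/(96*M)) = ε/6*ρ^2 := by field_simp; ring
    rw [he1, div_le_iff₀ (by positivity : (0:ℝ) < ρ^2)]
    rw [he2] at h16
    exact h16
  rw [Real.dist_eq]
  have hfin : 0 ≤ ε / 6 * (2 * Real.pi) + 2 * M * C * (2 * Real.pi) := by
    have := Real.pi_pos
    positivity
  calc |(schwarzIntegral b c z).re - b θ₀|
      = |(1/(2*Real.pi)) * ∫ t in (θ₀ - Real.pi)..(θ₀ + Real.pi),
          (b t - b θ₀) * (κ z t).re| := by rw [hkey]
  _ = (1/(2*Real.pi)) * |∫ t in (θ₀ - Real.pi)..(θ₀ + Real.pi),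
          (b t - b θ₀) * (κ z t).re| := by
        rw [abs_mul, _root_.abs_of_pos (by positivity : (0:ℝ) < 1/(2*Real.pi))]
  _ ≤ (1/(2*Real.pi)) * (ε / 6 * (2 * Real.pi) + 2 * M * C * (2 * Real.pi)) := by
        apply mul_le_mul_of_nonneg_left _ (by positivity : (0:ℝ) ≤ 1/(2*Real.pi))
        rw [← Real.norm_eq_abs]
        refine habs.trans ?_
        rw [hval, _root_.abs_of_nonneg hfin]
  _ = ε/6 + 2*M*C := by field_simp
  _ < ε := by linarith

lemma re_le_of_tendsto_zero {H : ℂ → ℂ}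
    (hd : ∀ z ∈ ball (0:ℂ) 1, DifferentiableAt ℂ H z)
    (hbd : ∀ θ : ℝ, Tendsto (fun z => (H z).re)
      (nhdsWithin (bp θ) (ball (0:ℂ) 1)) (nhds 0)) :
    ∀ z ∈ ball (0:ℂ) 1, (H z).re ≤ 0 := by
  intro z₀ hz₀
  rw [mem_ball, dist_eq_norm, sub_zero] at hz₀
  by_contra hpos
  push_neg at hpos
  set ε : ℝ := (H z₀).re / 2 with hεdef
  have hε : 0 < ε := by simp only [hεdef]; linarith
  -- neighborhoods of boundary points where re H < ε
  have cover : ∀ ζ ∈ sphere (0:ℂ) 1, ∃ U : Set ℂ,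
      IsOpen U ∧ ζ ∈ U ∧ ∀ w ∈ U ∩ ball (0:ℂ) 1, (H w).re < ε := by
    intro ζ hζ
    have : ‖ζ‖ = 1 := by
      rw [mem_sphere_iff_norm, sub_zero] at hζ
      exact hζ
    obtain ⟨θ, hθ⟩ := (Complex.norm_eq_one_iff ζ).mp this
    have hbp : bp θ = ζ := by rw [bp, mul_comm]; exact hθ
    have hev : ∀ᶠ w in nhdsWithin (bp θ) (ball (0:ℂ) 1), (H w).re < ε :=
      (hbd θ).eventually_lt_const hε
    rw [eventually_nhdsWithin_iff, _root_.eventually_nhds_iff] at hev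
    obtain ⟨U, hU1, hU2, hU3⟩ := hev
    exact ⟨U, hU2, hbp ▸ hU3, fun w hw => hU1 w hw.1 hw.2⟩
  choose! U hUopen hUmem hUsmall using cover
  set V : Set ℂ := ⋃ ζ ∈ sphere (0:ℂ) 1, U ζ with hVdef
  have hVopen : IsOpen V := isOpen_biUnion fun ζ hζ => hUopen ζ hζ
  have hVsub : sphere (0:ℂ) 1 ⊆ V := fun ζ hζ => Set.mem_biUnion hζ (hUmem ζ hζ)
  have hVsmall : ∀ w ∈ V ∩ ball (0:ℂ) 1, (H w).re < ε := by
    rintro w ⟨hw1, hw2⟩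
    obtain ⟨ζ, hζ, hwU⟩ := Set.mem_iUnion₂.mp hw1
    exact hUsmall ζ hζ w ⟨hwU, hw2⟩
  -- the compact leftover
  set K : Set ℂ := closedBall (0:ℂ) 1 \ V with hKdef
  have hKcomp : IsCompact K := (isCompact_closedBall (0:ℂ) 1).diff hVopen
  have hKball : ∀ w ∈ K, ‖w‖ < 1 := by
    intro w hw
    rcases lt_or_eq_of_le (by simpa [dist_eq_norm] using hw.1 : ‖w‖ ≤ 1) with h | h
    · exact h
    · exact absurd (hVsub (by simpa [mem_sphere_iff_norm] using h)) hw.2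
  obtain ⟨r₀, hr₀1, hr₀2⟩ : ∃ r₀ : ℝ, r₀ < 1 ∧ ∀ w ∈ K, ‖w‖ ≤ r₀ := by
    rcases K.eq_empty_or_nonempty with h | h
    · exact ⟨0, by norm_num, fun w hw => absurd hw (h ▸ Set.notMem_empty w)⟩
    · obtain ⟨x, hxK, hxmax⟩ := hKcomp.exists_isMaxOn h continuous_norm.continuousOn
      exact ⟨‖x‖, hKball x hxK, fun w hw => hxmax hw⟩
  obtain ⟨r, hr1, hr2⟩ := exists_between
    (show max (max r₀ ‖z₀‖) 0 < 1 by
      rw [max_lt_iff, max_lt_iff]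
      exact ⟨⟨hr₀1, hz₀⟩, by norm_num⟩)
  have hr0 : 0 < r := lt_of_le_of_lt (le_max_right _ 0) hr1
  have hrr₀ : r₀ < r := lt_of_le_of_lt (le_trans (le_max_left _ _) (le_max_left _ 0)) hr1
  have hrz₀ : ‖z₀‖ < r := lt_of_le_of_lt (le_trans (le_max_right _ _) (le_max_left _ 0)) hr1
  -- max modulus on ball 0 r
  have hmax := Complex.norm_le_of_forall_mem_frontier_norm_le
    (U := ball (0:ℂ) r) (z := z₀) isBounded_ball
    (f := fun w => Complex.exp (H w)) ?_ ?_ ?_ (C := Real.exp ε)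
  · have h1 : ‖Complex.exp (H z₀)‖ ≤ Real.exp ε := hmax
    rw [Complex.norm_exp, Real.exp_le_exp] at h1
    simp only [hεdef] at h1
    linarith
  · constructor
    · intro w hw
      have : ‖w‖ < 1 := by
        rw [mem_ball, dist_eq_norm, sub_zero] at hw
        linarith
      exact ((hd w (by simpa [mem_ball, dist_eq_norm] using this)).cexp).differentiableWithinAt
    · apply ContinuousOn.mono (s := closedBall (0:ℂ) r)
      · intro w hw
        rw [mem_closedBall, dist_eq_norm, sub_zero] at hw
        have : ‖w‖ < 1 := lt_of_le_of_lt hw hr2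
        exact ((hd w (by simpa [mem_ball, dist_eq_norm] using this)).cexp).continuousAt.continuousWithinAt
      · rw [closure_ball (0:ℂ) hr0.ne']
  · intro w hw
    rw [frontier_ball (0:ℂ) hr0.ne', mem_sphere_iff_norm, sub_zero] at hw
    have hw1 : ‖w‖ < 1 := by rw [hw]; exact hr2
    have hwD : w ∈ ball (0:ℂ) 1 := by simpa [mem_ball, dist_eq_norm] using hw1
    have hwV : w ∈ V := by
      by_contra hwV
      have : w ∈ K := ⟨by simpa [mem_closedBall, dist_eq_norm] using hw1.le, hwV⟩
      have := hr₀2 w this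
      rw [hw] at this
      linarith
    have := hVsmall w ⟨hwV, hwD⟩
    rw [Complex.norm_exp, Real.exp_le_exp]
    linarith
  · rw [closure_ball (0:ℂ) hr0.ne', mem_closedBall, dist_eq_norm, sub_zero]
    exact hrz₀.le

lemma eq_zero_of_re_zero {H : ℂ → ℂ}
    (hd : ∀ z ∈ ball (0:ℂ) 1, DifferentiableAt ℂ H z)
    (hre : ∀ z ∈ ball (0:ℂ) 1, (H z).re = 0) (him : (H 0).im = 0) :
    ∀ z ∈ ball (0:ℂ) 1, H z = 0 := by
  have h0 : (0:ℂ) ∈ ball (0:ℂ) 1 := by simp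
  have hH0 : H 0 = 0 := by
    apply Complex.ext
    · exact hre 0 h0
    · exact him
  -- exp ∘ H has constant modulus one
  have hnorm : ∀ z ∈ ball (0:ℂ) 1, ‖Complex.exp (H z)‖ = 1 := by
    intro z hz
    rw [Complex.norm_exp, hre z hz, Real.exp_zero]
  have heq : Set.EqOn (fun z => Complex.exp (H z)) (Function.const ℂ (Complex.exp (H 0)))
      (ball (0:ℂ) 1) := by
    apply Complex.eqOn_of_isPreconnected_of_isMaxOn_norm (convex_ball (0:ℂ) 1).isPreconnected
      isOpen_ball (fun z hz => ((hd z hz).cexp).differentiableWithinAt) h0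
    intro z hz
    simp only [Set.mem_setOf_eq, Function.comp]
    rw [hnorm z hz, hnorm 0 h0]
  -- derivative of H vanishes
  have hderiv : ∀ z ∈ ball (0:ℂ) 1, HasDerivAt H 0 z := by
    intro z hz
    have hdd : HasDerivAt H (deriv H z) z := (hd z hz).hasDerivAt
    set d := deriv H z
    have h1 : HasDerivAt (fun w => Complex.exp (H w)) (Complex.exp (H z) * d) z := hdd.cexp
    have h2 : HasDerivAt (fun w => Complex.exp (H w)) 0 z := by
      have : (fun w => Complex.exp (H w)) =ᶠ[nhds z] fun _ => Complex.exp (H 0) := by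
        filter_upwards [isOpen_ball.mem_nhds hz] with w hw
        exact heq hw
      exact (hasDerivAt_const z (Complex.exp (H 0))).congr_of_eventuallyEq this
    have h3 : Complex.exp (H z) * d = 0 := h1.unique h2
    have h4 : d = 0 := by
      rcases mul_eq_zero.mp h3 with h | h
      · exact absurd h (Complex.exp_ne_zero _)
      · exact h
    rwa [h4] at hdd
  -- constant on convex set
  intro z hz
  have := (convex_ball (0:ℂ) 1).is_const_of_fderivWithin_eq_zero
    (f := H) (fun w hw => (hd w hw).differentiableWithinAt) ?_ hz h0
  · rw [this, hH0]
  · intro w hw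
    rw [fderivWithin_of_isOpen isOpen_ball hw]
    have := (hderiv w hw).hasFDerivAt.fderiv
    rw [this]
    ext v
    simp

end SchwarzAux

/-- The Schwarz boundary value problem for holomorphic functions on the unit disk with
continuous boundary datum: existence, boundary behavior, normalization, and uniqueness. -/
theorem schwarz_bvp_holomorphic (b : ℝ → ℝ) (hb : Continuous b)
    (hbper : Function.Periodic b (2 * Real.pi)) (c : ℝ) :
    (∀ z ∈ unitDisk, DifferentiableAt ℂ (schwarzIntegral b c) z) ∧
      (schwarzIntegral b c 0).im = c ∧
      (∀ θ₀ : ℝ, Tendsto (fun z => (schwarzIntegral b c z).re)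
        (nhdsWithin (Complex.exp (Complex.I * θ₀)) unitDisk) (nhds (b θ₀))) ∧
      (∀ G : ℂ → ℂ, (∀ z ∈ unitDisk, DifferentiableAt ℂ G z) → (G 0).im = c →
        (∀ θ₀ : ℝ, Tendsto (fun z => (G z).re)
          (nhdsWithin (Complex.exp (Complex.I * θ₀)) unitDisk) (nhds (b θ₀))) →
        ∀ z ∈ unitDisk, G z = schwarzIntegral b c z) := by
  have hUD : unitDisk = ball (0:ℂ) 1 := rfl
  have hdisk : ∀ z : ℂ, z ∈ unitDisk ↔ ‖z‖ < 1 := fun z => by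
    rw [hUD, mem_ball, dist_eq_norm, sub_zero]
  refine ⟨fun z hz => schwarz_differentiableAt b hb c ((hdisk z).mp hz),
    schwarz_im_zero b hb c, ?_, ?_⟩
  · intro θ₀
    rw [hUD, show Complex.exp (Complex.I * θ₀) = bp θ₀ from rfl]
    exact schwarz_tendsto b hb hbper c θ₀
  intro G hGd hGim hGbd z hz
  have hzb : z ∈ ball (0:ℂ) 1 := hUD ▸ hz
  have hFd : ∀ w ∈ ball (0:ℂ) 1, DifferentiableAt ℂ (schwarzIntegral b c) w := fun w hw =>
    schwarz_differentiableAt b hb c (by rwa [mem_ball, dist_eq_norm, sub_zero] at hw)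
  have hGd' : ∀ w ∈ ball (0:ℂ) 1, DifferentiableAt ℂ G w := fun w hw =>
    hGd w (hUD ▸ hw)
  have hHd : ∀ w ∈ ball (0:ℂ) 1,
      DifferentiableAt ℂ (fun w => G w - schwarzIntegral b c w) w := fun w hw =>
    (hGd' w hw).sub (hFd w hw)
  have hHbd : ∀ θ : ℝ, Tendsto (fun w => ((fun w => G w - schwarzIntegral b c w) w).re)
      (nhdsWithin (bp θ) (ball (0:ℂ) 1)) (nhds 0) := by
    intro θ
    have h1 : Tendsto (fun w => (G w).re) (nhdsWithin (bp θ) (ball (0:ℂ) 1)) (nhds (b θ)) := by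
      rw [← hUD]; exact hGbd θ
    have h2 := schwarz_tendsto b hb hbper c θ
    have h3 := h1.sub h2
    rw [sub_self] at h3
    simpa [Complex.sub_re] using h3
  have hle := re_le_of_tendsto_zero hHd hHbd
  have hge := re_le_of_tendsto_zero (H := fun w => -(G w - schwarzIntegral b c w))
    (fun w hw => (hHd w hw).neg) (fun θ => by simpa using (hHbd θ).neg)
  have hre : ∀ w ∈ ball (0:ℂ) 1, ((fun w => G w - schwarzIntegral b c w) w).re = 0 := by
    intro w hw
    have h1 := hle w hw
    have h2 := hge w hw
    simp only [Complex.neg_re] at h2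
    simp only at h1 ⊢
    linarith
  have him : ((fun w => G w - schwarzIntegral b c w) 0).im = 0 := by
    simp only [Complex.sub_im]
    rw [hGim, schwarz_im_zero b hb c]
    ring
  have hz0 := eq_zero_of_re_zero hHd hre him z hzb
  exact sub_eq_zero.mp hz0
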